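/- Let f(x) = ∫₀ˣ √(1−τ)/(1+τ) dτ and define M(n) = ∫₀¹ xⁿ f(x) dx for n ∈ ℕ. Then for all integers n ≥ 2, 6·∫₀¹ √(1−τ)/(1+τ) dτ = −2(n−1)n·M(n−2) + 3n·M(n−1) + (n+1)(2n+3)·M(n). -/

import Mathlib

open MeasureTheory Real intervalIntegral

private noncomputable def gg : ℝ → ℝ := fun τ => Real.sqrt (1 - τ) / (1 + τ)

private lemma gg_contAt {x : ℝ} (hx : (0:ℝ) ≤ x) : ContinuousAt gg x := by
  apply ContinuousAt.div
  · exact (Real.continuous_sqrt.comp (continuous_const.sub continuous_id)).continuousAt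
  · exact (continuous_const.add continuous_id).continuousAt
  · intro h; linarith

private lemma gg_meas : Measurable gg := by
  unfold gg
  exact ((Real.continuous_sqrt.comp (continuous_const.sub continuous_id)).measurable).div
    ((continuous_const.add continuous_id).measurable)

private lemma gg_intInt {a b : ℝ} (ha : 0 ≤ a) (hb : 0 ≤ b) :
    IntervalIntegrable gg volume a b := by
  apply ContinuousOn.intervalIntegrable
  intro x hx
  exact (gg_contAt (le_trans (le_min ha hb) hx.1)).continuousWithinAt

/-- FTC derivative of f -/
private lemma hasDerivAt_f {x : ℝ} (hx : 0 ≤ x) :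
    HasDerivAt (fun u => ∫ τ in (0:ℝ)..u, gg τ) (gg x) x :=
  integral_hasDerivAt_right (gg_intInt le_rfl hx)
    gg_meas.aestronglyMeasurable.stronglyMeasurableAtFilter (gg_contAt hx)

private lemma f_contOn : ContinuousOn (fun u => ∫ τ in (0:ℝ)..u, gg τ) (Set.Icc (0:ℝ) 1) :=
  fun x hx => (hasDerivAt_f hx.1).continuousAt.continuousWithinAt

/-- Integration by parts: (k+1) M k + I (k+1) = f 1. -/
private lemma parts (k : ℕ) :
    ((k:ℝ)+1) * (∫ x in (0:ℝ)..1, x ^ k * (∫ τ in (0:ℝ)..x, gg τ))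
      + (∫ x in (0:ℝ)..1, x ^ (k+1) * gg x)
    = ∫ τ in (0:ℝ)..1, gg τ := by
  have key : ∫ x in (0:ℝ)..1,
      (((k:ℝ)+1) * x ^ k * (∫ τ in (0:ℝ)..x, gg τ) + x ^ (k+1) * gg x)
      = ∫ τ in (0:ℝ)..1, gg τ := by
    have := integral_eq_sub_of_hasDerivAt (a := (0:ℝ)) (b := 1)
      (f := fun x => x ^ (k+1) * (∫ τ in (0:ℝ)..x, gg τ))
      (f' := fun x => ((k:ℝ)+1) * x ^ k * (∫ τ in (0:ℝ)..x, gg τ) + x ^ (k+1) * gg x)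
      ?_ ?_
    · rw [this]; simp
    · intro x hx
      rw [Set.uIcc_of_le (by norm_num)] at hx
      have h1 : HasDerivAt (fun u : ℝ => u ^ (k+1)) (((k:ℝ)+1) * x ^ k) x := by
        simpa using (hasDerivAt_pow (k+1) x)
      exact h1.mul (hasDerivAt_f hx.1)
    · apply ContinuousOn.intervalIntegrable
      rw [Set.uIcc_of_le (by norm_num)]
      apply ContinuousOn.add
      · exact (continuousOn_const.mul (continuousOn_pow k)).mul f_contOn
      · exact (continuousOn_pow (k+1)).mul
          (fun x hx => (gg_contAt hx.1).continuousWithinAt)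
  have hInt1 : IntervalIntegrable (fun x => ((k:ℝ)+1) * x ^ k * (∫ τ in (0:ℝ)..x, gg τ)) volume 0 1 := by
    apply ContinuousOn.intervalIntegrable
    rw [Set.uIcc_of_le (by norm_num)]
    exact (continuousOn_const.mul (continuousOn_pow k)).mul f_contOn
  have hInt2 : IntervalIntegrable (fun x => x ^ (k+1) * gg x) volume 0 1 := by
    apply ContinuousOn.intervalIntegrable
    rw [Set.uIcc_of_le (by norm_num)]
    exact (continuousOn_pow (k+1)).mul (fun x hx => (gg_contAt hx.1).continuousWithinAt)
  rw [← key, intervalIntegral.integral_add hInt1 hInt2,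
    ← intervalIntegral.integral_const_mul]
  congr 1
  apply intervalIntegral.integral_congr
  intro x _
  ring

private lemma rpow32 {u : ℝ} (hu : 0 ≤ u) : u ^ ((3:ℝ)/2) = u * Real.sqrt u := by
  rcases eq_or_lt_of_le hu with h | h
  · rw [← h]; simp [Real.zero_rpow]
  · rw [show (3:ℝ)/2 = 1 + 1/2 by norm_num, Real.rpow_add h, Real.rpow_one,
      ← Real.sqrt_eq_rpow]

/-- Key recurrence among the I integrals: (2k+5) I(k+2) + 3 I(k+1) = (2k+2) I(k). -/
private lemma Irec (k : ℕ) :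
    (2*(k:ℝ)+5) * (∫ x in (0:ℝ)..1, x ^ (k+2) * gg x)
      + 3 * (∫ x in (0:ℝ)..1, x ^ (k+1) * gg x)
    = (2*(k:ℝ)+2) * (∫ x in (0:ℝ)..1, x ^ k * gg x) := by
  -- H x = x^(k+1) * (1-x)^(3/2); ∫ H' = 0
  have key : ∫ x in (0:ℝ)..1,
      (((k:ℝ)+1) * x ^ k * (1-x) ^ ((3:ℝ)/2) + x ^ (k+1) * ((3:ℝ)/2 * (1-x) ^ ((3:ℝ)/2 - 1) * (-1)))
      = 0 := by
    have := integral_eq_sub_of_hasDerivAt (a := (0:ℝ)) (b := 1)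
      (f := fun x => x ^ (k+1) * (1-x) ^ ((3:ℝ)/2))
      (f' := fun x => ((k:ℝ)+1) * x ^ k * (1-x) ^ ((3:ℝ)/2)
        + x ^ (k+1) * ((3:ℝ)/2 * (1-x) ^ ((3:ℝ)/2 - 1) * (-1)))
      ?_ ?_
    · rw [this]; simp [Real.zero_rpow]
    · intro x hx
      have h1 : HasDerivAt (fun u : ℝ => u ^ (k+1)) (((k:ℝ)+1) * x ^ k) x := by
        simpa using (hasDerivAt_pow (k+1) x)
      have h2 : HasDerivAt (fun u : ℝ => (1-u) ^ ((3:ℝ)/2))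
          ((3:ℝ)/2 * (1-x) ^ ((3:ℝ)/2 - 1) * (-1)) x := by
        have := (Real.hasDerivAt_rpow_const (x := 1-x) (p := (3:ℝ)/2)
          (Or.inr (by norm_num))).comp x ((hasDerivAt_id x).const_sub 1)
        simpa [Function.comp_def] using this
      exact h1.mul h2
    · apply ContinuousOn.intervalIntegrable
      apply ContinuousOn.add
      · apply (continuousOn_const.mul (continuousOn_pow k)).mul
        exact ((continuous_const.sub continuous_id).continuousOn).rpow_const
          (fun x _ => Or.inr (by norm_num))
      · apply (continuousOn_pow (k+1)).mul
        apply ContinuousOn.mul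
        · exact continuousOn_const.mul
            (((continuous_const.sub continuous_id).continuousOn).rpow_const
              (fun x _ => Or.inr (by norm_num)))
        · exact continuousOn_const
  -- rewrite LHS - RHS as ∫ of -2 * (the derivative)
  have comb : (2*(k:ℝ)+5) * (∫ x in (0:ℝ)..1, x ^ (k+2) * gg x)
      + 3 * (∫ x in (0:ℝ)..1, x ^ (k+1) * gg x)
      - (2*(k:ℝ)+2) * (∫ x in (0:ℝ)..1, x ^ k * gg x)
      = ∫ x in (0:ℝ)..1,
        ((2*(k:ℝ)+5) * (x ^ (k+2) * gg x) + 3 * (x ^ (k+1) * gg x)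
          - (2*(k:ℝ)+2) * (x ^ k * gg x)) := by
    have i2 : IntervalIntegrable (fun x => x ^ (k+2) * gg x) volume 0 1 := by
      apply ContinuousOn.intervalIntegrable
      rw [Set.uIcc_of_le (by norm_num)]
      exact (continuousOn_pow (k+2)).mul (fun x hx => (gg_contAt hx.1).continuousWithinAt)
    have i1 : IntervalIntegrable (fun x => x ^ (k+1) * gg x) volume 0 1 := by
      apply ContinuousOn.intervalIntegrable
      rw [Set.uIcc_of_le (by norm_num)]
      exact (continuousOn_pow (k+1)).mul (fun x hx => (gg_contAt hx.1).continuousWithinAt)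
    have i0 : IntervalIntegrable (fun x => x ^ k * gg x) volume 0 1 := by
      apply ContinuousOn.intervalIntegrable
      rw [Set.uIcc_of_le (by norm_num)]
      exact (continuousOn_pow k).mul (fun x hx => (gg_contAt hx.1).continuousWithinAt)
    rw [intervalIntegral.integral_sub ((i2.const_mul _).add (i1.const_mul _)) (i0.const_mul _),
      intervalIntegral.integral_add (i2.const_mul _) (i1.const_mul _),
      intervalIntegral.integral_const_mul, intervalIntegral.integral_const_mul,
      intervalIntegral.integral_const_mul]
  have ptwise : ∀ x ∈ Set.uIcc (0:ℝ) 1,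
      ((2*(k:ℝ)+5) * (x ^ (k+2) * gg x) + 3 * (x ^ (k+1) * gg x)
          - (2*(k:ℝ)+2) * (x ^ k * gg x))
      = (-2) * (((k:ℝ)+1) * x ^ k * (1-x) ^ ((3:ℝ)/2)
          + x ^ (k+1) * ((3:ℝ)/2 * (1-x) ^ ((3:ℝ)/2 - 1) * (-1))) := by
    intro x hx
    rw [Set.uIcc_of_le (by norm_num)] at hx
    obtain ⟨hx0, hx1⟩ := hx
    have h1x : (0:ℝ) ≤ 1 - x := by linarith
    have hden : (1:ℝ) + x ≠ 0 := by linarith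
    have e32 : (1-x) ^ ((3:ℝ)/2) = (1-x) * Real.sqrt (1-x) := rpow32 h1x
    have e12 : (1-x) ^ ((3:ℝ)/2 - 1) = Real.sqrt (1-x) := by
      rw [show (3:ℝ)/2 - 1 = 1/2 by norm_num, ← Real.sqrt_eq_rpow]
    rw [e32, e12]
    unfold gg
    field_simp
    ring
  rw [intervalIntegral.integral_congr ptwise] at comb
  rw [intervalIntegral.integral_const_mul, key] at comb
  linarith

/-- Recurrence for the Mellin transform of `f(x) = ∫₀ˣ √(1−τ)/(1+τ) dτ`:
`6·f(1) = −2(n−1)n·M(n−2) + 3n·M(n−1) + (n+1)(2n+3)·M(n)` for `n ≥ 2`. -/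
theorem mellin_recurrence_int_sqrt (f : ℝ → ℝ) (M : ℕ → ℝ)
    (hf : ∀ x : ℝ, f x = ∫ τ in (0:ℝ)..x, Real.sqrt (1 - τ) / (1 + τ))
    (hM : ∀ n : ℕ, M n = ∫ x in (0:ℝ)..1, x ^ n * f x) :
    ∀ n : ℕ, 2 ≤ n →
      6 * (∫ τ in (0:ℝ)..1, Real.sqrt (1 - τ) / (1 + τ)) =
        -2 * ((n : ℝ) - 1) * n * M (n - 2) + 3 * n * M (n - 1) +
          ((n : ℝ) + 1) * (2 * n + 3) * M n := by
  intro n hn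
  obtain ⟨m, rfl⟩ := Nat.exists_eq_add_of_le hn
  have hgg : ∀ x : ℝ, (∫ τ in (0:ℝ)..x, Real.sqrt (1 - τ) / (1 + τ)) = ∫ τ in (0:ℝ)..x, gg τ :=
    fun x => rfl
  have hMI : ∀ k : ℕ, M k = ∫ x in (0:ℝ)..1, x ^ k * (∫ τ in (0:ℝ)..x, gg τ) := by
    intro k
    rw [hM k]
    refine intervalIntegral.integral_congr fun x _ => ?_
    rw [hf x]
    rfl
  have hidx2 : 2 + m - 2 = m := by omega
  have hidx1 : 2 + m - 1 = m + 1 := by omega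
  have hidx0 : 2 + m = m + 2 := by omega
  rw [hidx2, hidx1, hidx0, hMI m, hMI (m+1), hMI (m+2), hgg 1]
  have p0 := parts m
  have p1 := parts (m+1)
  have p2 := parts (m+2)
  have ir := Irec (m+1)
  push_cast at p0 p1 p2 ir ⊢
  nlinarith [p0, p1, p2, ir]
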